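/- Deduction theorem for resolution: if Γ ∪ {x} ⊢ y and Γ ⊬ y, then Γ ⊢ {¬x, y}. More generally, the resolution closure satisfies RES(Γ ∪ A⁻) = RES(Γ) ∪ A⁻ ∪ {P \ B | Γ ⊢ P, B ⊆ A}, where A⁻ is the set of unit clauses with literals complementary to those of clause A. -/
import Mathlib


/-- A clause over atoms `V`: positive atoms and negated atoms. -/
abbrev Clause (V : Type) := Finset V × Finset V

/-- Resolution derivability from a set of clauses `Γ`:
membership, the axioms `a ∨ ¬a`, and the resolution (cut) rule. -/
inductive Res {V : Type} [DecidableEq V] (Γ : Set (Clause V)) : Clause V → Prop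
  | mem {C : Clause V} : C ∈ Γ → Res Γ C
  | ax (a : V) : Res Γ ({a}, {a})
  | cut {A₁ B₁ A₂ B₂ : Finset V} (a : V) :
      Res Γ (insert a A₁, B₁) → Res Γ (A₂, insert a B₂) → Res Γ (A₁ ∪ A₂, B₁ ∪ B₂)

/-- Satisfaction of a clause by a 3-partition `(t,f,p)` of the atoms. -/
def Sat {V : Type} (t f p : Set V) (C : Clause V) : Prop :=
  (∃ a ∈ C.1, a ∈ t) ∨ (∃ b ∈ C.2, b ∈ f) ∨
    ((∀ a ∈ C.1, a ∈ p) ∧ (∀ b ∈ C.2, b ∈ p) ∧ p.Nonempty)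


section Aux
variable {V : Type} [DecidableEq V]

lemma Res.mono {Γ Δ : Set (Clause V)} (h : Γ ⊆ Δ) {C} (hc : Res Γ C) : Res Δ C := by
  induction hc with
  | mem h' => exact .mem (h h')
  | ax a => exact .ax a
  | cut a _ _ ih1 ih2 => exact .cut a ih1 ih2

lemma Res.erase_pos {Γ : Set (Clause V)} {X Y : Finset V} {a : V} (h : Res Γ (X, Y))
    (hu : ((∅ : Finset V), ({a} : Finset V)) ∈ Γ) : Res Γ (X.erase a, Y) := by
  by_cases ha : a ∈ X
  · have h2 : Res Γ ((∅ : Finset V), insert a (∅ : Finset V)) := by simpa using Res.mem hu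
    have h1 : Res Γ (insert a (X.erase a), Y) := by rwa [Finset.insert_erase ha]
    simpa using Res.cut a h1 h2
  · rwa [Finset.erase_eq_of_notMem ha]

lemma Res.erase_neg {Γ : Set (Clause V)} {X Y : Finset V} {a : V} (h : Res Γ (X, Y))
    (hu : (({a} : Finset V), (∅ : Finset V)) ∈ Γ) : Res Γ (X, Y.erase a) := by
  by_cases ha : a ∈ Y
  · have h2 : Res Γ (insert a (∅ : Finset V), (∅ : Finset V)) := by simpa using Res.mem hu
    have h1 : Res Γ (X, insert a (Y.erase a)) := by rwa [Finset.insert_erase ha]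
    simpa using Res.cut a h2 h1
  · rwa [Finset.erase_eq_of_notMem ha]

lemma Res.sdiff_pos {Γ : Set (Clause V)} {X Y : Finset V} (h : Res Γ (X, Y)) (S : Finset V)
    (hS : ∀ a ∈ S, ((∅ : Finset V), ({a} : Finset V)) ∈ Γ) : Res Γ (X \ S, Y) := by
  induction S using Finset.induction_on with
  | empty => simpa
  | @insert a s ha ih =>
      rw [Finset.sdiff_insert]
      exact (ih fun b hb => hS b (Finset.mem_insert_of_mem hb)).erase_pos
        (hS a (Finset.mem_insert_self a s))

lemma Res.sdiff_neg {Γ : Set (Clause V)} {X Y : Finset V} (h : Res Γ (X, Y)) (T : Finset V)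
    (hT : ∀ a ∈ T, (({a} : Finset V), (∅ : Finset V)) ∈ Γ) : Res Γ (X, Y \ T) := by
  induction T using Finset.induction_on with
  | empty => simpa
  | @insert a s ha ih =>
      rw [Finset.sdiff_insert]
      exact (ih fun b hb => hT b (Finset.mem_insert_of_mem hb)).erase_neg
        (hT a (Finset.mem_insert_self a s))

lemma Res.cut' {Γ : Set (Clause V)} {X1 X2 Z1 Z2 X1' Z2' : Finset V} {a : V}
    (h1 : Res Γ (X1, X2)) (h2 : Res Γ (Z1, Z2))
    (hX : insert a X1' = X1) (hZ : insert a Z2' = Z2) :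
    Res Γ (X1' ∪ Z1, X2 ∪ Z2') := by
  subst hX hZ; exact .cut a h1 h2

lemma hsub {p q s t u : Finset V} (h1 : p \ s ⊆ u) (h2 : q \ t ⊆ u) :
    (p ∪ q) \ (s ∪ t) ⊆ u := by
  intro x hx
  simp only [Finset.mem_sdiff, Finset.mem_union, not_or] at hx
  rcases hx with ⟨h | h, hs, ht⟩
  exacts [h1 (Finset.mem_sdiff.mpr ⟨h, hs⟩), h2 (Finset.mem_sdiff.mpr ⟨h, ht⟩)]

lemma herase {p s u : Finset V} {a : V} (h : p \ insert a s ⊆ u) : (p.erase a) \ s ⊆ u := by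
  intro x hx
  simp only [Finset.mem_sdiff, Finset.mem_erase] at hx
  exact h (by simp only [Finset.mem_sdiff, Finset.mem_insert, not_or]; tauto)

lemma hins {p s u : Finset V} {a : V} (ha : a ∈ u) (h : p \ insert a s ⊆ u) : p \ s ⊆ u := by
  intro x hx
  by_cases hxa : x = a
  · subst hxa; exact ha
  · simp only [Finset.mem_sdiff] at hx
    exact h (by simp only [Finset.mem_sdiff, Finset.mem_insert, not_or]; tauto)

lemma fwd {Γ : Set (Clause V)} {S T : Finset V} {C : Clause V}
    (h : Res (Γ ∪ ({D | ∃ a ∈ S, D = ((∅ : Finset V), ({a} : Finset V))} ∪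
                   {D | ∃ b ∈ T, D = (({b} : Finset V), (∅ : Finset V))})) C) :
    (∃ a ∈ S, C = ((∅ : Finset V), ({a} : Finset V))) ∨
    (∃ b ∈ T, C = (({b} : Finset V), (∅ : Finset V))) ∨
    ∃ P : Clause V, Res Γ P ∧ C.1 ⊆ P.1 ∧ C.2 ⊆ P.2 ∧ P.1 \ C.1 ⊆ S ∧ P.2 \ C.2 ⊆ T := by
  induction h with
  | @mem C hC =>
      rcases hC with hC | hC | hC
      · exact .inr (.inr ⟨C, .mem hC, subset_rfl, subset_rfl, by simp, by simp⟩)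
      · exact .inl hC
      · exact .inr (.inl hC)
  | ax a => exact .inr (.inr ⟨({a}, {a}), .ax a, subset_rfl, subset_rfl, by simp, by simp⟩)
  | @cut A₁ B₁ A₂ B₂ a h1 h2 ih1 ih2 =>
      refine .inr (.inr ?_)
      rcases ih1 with ⟨c, hc, heq⟩ | ⟨b, hbT, heq⟩ | ⟨P₁, hP₁, hs1, ht1, hd1, he1⟩
      <;> try (replace hs1 : insert a A₁ ⊆ P₁.1 := hs1;
               replace ht1 : B₁ ⊆ P₁.2 := ht1;
               replace hd1 : P₁.1 \ insert a A₁ ⊆ S := hd1;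
               replace he1 : P₁.2 \ B₁ ⊆ T := he1)
      · exact absurd (congrArg Prod.fst heq) (by simp)
      · -- premise1 is a unit ({a},∅) with a ∈ T
        rw [Prod.mk.injEq] at heq
        obtain ⟨e1, e2⟩ := heq
        have hab : a = b := by
          have : a ∈ ({b} : Finset V) := e1 ▸ Finset.mem_insert_self a A₁
          simpa using this
        subst hab
        have hA₁ : A₁ ⊆ {a} := e1 ▸ Finset.subset_insert a A₁
        subst e2
        rcases ih2 with ⟨c, hcS, heq2⟩ | ⟨b, hbT2, heq2⟩ | ⟨P₂, hP₂, hs2, ht2, hd2, he2⟩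
        <;> try (replace hs2 : A₂ ⊆ P₂.1 := hs2;
                 replace ht2 : insert a B₂ ⊆ P₂.2 := ht2;
                 replace hd2 : P₂.1 \ A₂ ⊆ S := hd2;
                 replace he2 : P₂.2 \ insert a B₂ ⊆ T := he2)
        · -- premise2 is unit (∅,{a}) with a ∈ S : both units
          rw [Prod.mk.injEq] at heq2
          obtain ⟨e1', e2'⟩ := heq2
          have hac : a = c := by
            have : a ∈ ({c} : Finset V) := e2' ▸ Finset.mem_insert_self a B₂
            simpa using this
          subst hac
          have hB₂ : B₂ ⊆ {a} := e2' ▸ Finset.subset_insert a B₂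
          subst e1'
          refine ⟨({a}, {a}), .ax a, by simpa using hA₁, by simpa using hB₂, ?_, ?_⟩
          · intro x hx
            have : x = a := by simpa using (Finset.mem_sdiff.1 hx).1
            subst this; exact hcS
          · intro x hx
            have : x = a := by simpa using (Finset.mem_sdiff.1 hx).1
            subst this; exact hbT
        · exact absurd (congrArg Prod.snd heq2) (by simp)
        · -- prem1 unit with a ∈ T, prem2 from P₂
          have haP2 : a ∈ P₂.2 := ht2 (Finset.mem_insert_self a B₂)
          by_cases haA : a ∈ A₁
          · refine ⟨({a} ∪ P₂.1, {a} ∪ P₂.2.erase a),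
              Res.cut' (.ax a) hP₂ (by simp) (Finset.insert_erase haP2), ?_, ?_, ?_, ?_⟩
            · exact Finset.union_subset_union hA₁ hs2
            · intro x hx
              simp only [Finset.mem_union, Finset.empty_union] at hx ⊢
              by_cases hxa : x = a
              · exact Or.inl (by simp [hxa])
              · exact Or.inr (Finset.mem_erase.2 ⟨hxa, ht2 (Finset.mem_insert_of_mem hx)⟩)
            · refine hsub ?_ hd2
              intro x hx
              simp only [Finset.mem_sdiff, Finset.mem_singleton] at hx
              exact absurd (hx.1 ▸ haA) hx.2
            · exact hsub (by intro x hx; simp only [Finset.mem_sdiff, Finset.mem_singleton] at hx; exact hx.1 ▸ hbT) (herase he2)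
          · have hA₁e : A₁ = ∅ := by
              rcases Finset.subset_singleton_iff.1 hA₁ with h | h
              · exact h
              · exact absurd (h ▸ Finset.mem_singleton_self a) (by simpa [h] using haA)
            subst hA₁e
            refine ⟨P₂, hP₂, by simpa using hs2, ?_, by simpa using hd2, ?_⟩
            · intro x hx
              exact ht2 (Finset.mem_insert_of_mem (by simpa using hx))
            · simpa using hins hbT he2
      · rcases ih2 with ⟨c, hcS, heq2⟩ | ⟨b, hbT2, heq2⟩ | ⟨P₂, hP₂, hs2, ht2, hd2, he2⟩
        <;> try (replace hs2 : A₂ ⊆ P₂.1 := hs2;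
                 replace ht2 : insert a B₂ ⊆ P₂.2 := ht2;
                 replace hd2 : P₂.1 \ A₂ ⊆ S := hd2;
                 replace he2 : P₂.2 \ insert a B₂ ⊆ T := he2)
        · -- prem1 from P₁, prem2 unit (∅,{a}) with a ∈ S
          rw [Prod.mk.injEq] at heq2
          obtain ⟨e1', e2'⟩ := heq2
          have hac : a = c := by
            have : a ∈ ({c} : Finset V) := e2' ▸ Finset.mem_insert_self a B₂
            simpa using this
          subst hac
          have hB₂ : B₂ ⊆ {a} := e2' ▸ Finset.subset_insert a B₂
          subst e1'
          have haP1 : a ∈ P₁.1 := hs1 (Finset.mem_insert_self a A₁)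
          by_cases haB : a ∈ B₂
          · refine ⟨(P₁.1.erase a ∪ {a}, P₁.2 ∪ {a}),
              Res.cut' hP₁ (.ax a) (Finset.insert_erase haP1) (by simp), ?_, ?_, ?_, ?_⟩
            · intro x hx
              simp only [Finset.union_empty] at hx
              simp only [Finset.mem_union, Finset.mem_erase, Finset.mem_singleton]
              by_cases hxa : x = a
              · exact Or.inr hxa
              · exact Or.inl ⟨hxa, hs1 (Finset.mem_insert_of_mem hx)⟩
            · exact Finset.union_subset_union ht1 hB₂
            · refine hsub (herase hd1) ?_
              intro x hx
              simp only [Finset.mem_sdiff, Finset.mem_singleton] at hx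
              exact hx.1 ▸ hcS
            · refine hsub he1 ?_
              intro x hx
              simp only [Finset.mem_sdiff, Finset.mem_singleton] at hx
              exact absurd (hx.1 ▸ haB) hx.2
          · have hB₂e : B₂ = ∅ := by
              rcases Finset.subset_singleton_iff.1 hB₂ with h | h
              · exact h
              · exact absurd (h ▸ Finset.mem_singleton_self a) (by simpa [h] using haB)
            subst hB₂e
            refine ⟨P₁, hP₁, ?_, by simpa using ht1, ?_, by simpa using he1⟩
            · intro x hx
              exact hs1 (Finset.mem_insert_of_mem (by simpa using hx))
            · simpa using hins hcS hd1
        · exact absurd (congrArg Prod.snd heq2) (by simp)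
        · -- main case: both from Γ-derivable P₁, P₂
          have haP1 : a ∈ P₁.1 := hs1 (Finset.mem_insert_self a A₁)
          have haP2 : a ∈ P₂.2 := ht2 (Finset.mem_insert_self a B₂)
          by_cases haA : a ∈ A₁ <;> by_cases haB : a ∈ B₂
          · rw [Finset.insert_eq_self.2 haA] at hs1 hd1
            rw [Finset.insert_eq_self.2 haB] at ht2 he2
            exact ⟨(P₁.1 ∪ P₂.1, P₁.2 ∪ P₂.2),
              Res.cut' hP₁ hP₂ (Finset.insert_eq_self.2 haP1) (Finset.insert_eq_self.2 haP2),
              Finset.union_subset_union hs1 hs2, Finset.union_subset_union ht1 ht2,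
              hsub hd1 hd2, hsub he1 he2⟩
          · rw [Finset.insert_eq_self.2 haA] at hs1 hd1
            exact ⟨(P₁.1 ∪ P₂.1, P₁.2 ∪ P₂.2.erase a),
              Res.cut' hP₁ hP₂ (Finset.insert_eq_self.2 haP1) (Finset.insert_erase haP2),
              Finset.union_subset_union hs1 hs2,
              Finset.union_subset_union ht1 (Finset.subset_erase.2
                ⟨(Finset.subset_insert a B₂).trans ht2, haB⟩),
              hsub hd1 hd2, hsub he1 (herase he2)⟩
          · rw [Finset.insert_eq_self.2 haB] at ht2 he2
            exact ⟨(P₁.1.erase a ∪ P₂.1, P₁.2 ∪ P₂.2),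
              Res.cut' hP₁ hP₂ (Finset.insert_erase haP1) (Finset.insert_eq_self.2 haP2),
              Finset.union_subset_union (Finset.subset_erase.2
                ⟨(Finset.subset_insert a A₁).trans hs1, haA⟩) hs2,
              Finset.union_subset_union ht1 ht2,
              hsub (herase hd1) hd2, hsub he1 he2⟩
          · exact ⟨(P₁.1.erase a ∪ P₂.1, P₁.2 ∪ P₂.2.erase a),
              Res.cut' hP₁ hP₂ (Finset.insert_erase haP1) (Finset.insert_erase haP2),
              Finset.union_subset_union (Finset.subset_erase.2
                ⟨(Finset.subset_insert a A₁).trans hs1, haA⟩) hs2,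
              Finset.union_subset_union ht1 (Finset.subset_erase.2
                ⟨(Finset.subset_insert a B₂).trans ht2, haB⟩),
              hsub (herase hd1) hd2, hsub he1 (herase he2)⟩


lemma bwd {Γ : Set (Clause V)} {S T : Finset V} {P : Clause V} {B1 B2 : Finset V}
    (hP : Res Γ P) (hB1 : B1 ⊆ S) (hB2 : B2 ⊆ T) :
    Res (Γ ∪ ({D | ∃ a ∈ S, D = ((∅ : Finset V), ({a} : Finset V))} ∪
              {D | ∃ b ∈ T, D = (({b} : Finset V), (∅ : Finset V))})) (P.1 \ B1, P.2 \ B2) := by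
  have h0 : Res (Γ ∪ ({D | ∃ a ∈ S, D = ((∅ : Finset V), ({a} : Finset V))} ∪
              {D | ∃ b ∈ T, D = (({b} : Finset V), (∅ : Finset V))})) (P.1, P.2) :=
    hP.mono Set.subset_union_left
  exact (h0.sdiff_pos B1 fun a ha => Or.inr (Or.inl ⟨a, hB1 ha, rfl⟩)).sdiff_neg B2
    fun b hb => Or.inr (Or.inr ⟨b, hB2 hb, rfl⟩)

end Aux

theorem stmt17 {V : Type} [DecidableEq V] :
    (∀ (Γ : Set (Clause V)) (x y : V),
      Res (Γ ∪ {(({x} : Finset V), (∅ : Finset V))}) ({y}, ∅) →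
      ¬ Res Γ ({y}, ∅) → Res Γ ({y}, {x})) ∧
    (∀ (Γ : Set (Clause V)) (A : Clause V),
      {C | Res (Γ ∪ ({D | ∃ a ∈ A.1, D = ((∅ : Finset V), ({a} : Finset V))} ∪
                     {D | ∃ b ∈ A.2, D = (({b} : Finset V), (∅ : Finset V))})) C} =
        {C | Res Γ C} ∪
        ({D | ∃ a ∈ A.1, D = ((∅ : Finset V), ({a} : Finset V))} ∪
         {D | ∃ b ∈ A.2, D = (({b} : Finset V), (∅ : Finset V))}) ∪
        {C | ∃ P : Clause V, ∃ B : Clause V, Res Γ P ∧ B.1 ⊆ A.1 ∧ B.2 ⊆ A.2 ∧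
              C = (P.1 \ B.1, P.2 \ B.2)}) := by
  have main : ∀ (Γ : Set (Clause V)) (A : Clause V),
      {C | Res (Γ ∪ ({D | ∃ a ∈ A.1, D = ((∅ : Finset V), ({a} : Finset V))} ∪
                     {D | ∃ b ∈ A.2, D = (({b} : Finset V), (∅ : Finset V))})) C} =
        {C | Res Γ C} ∪
        ({D | ∃ a ∈ A.1, D = ((∅ : Finset V), ({a} : Finset V))} ∪
         {D | ∃ b ∈ A.2, D = (({b} : Finset V), (∅ : Finset V))}) ∪
        {C | ∃ P : Clause V, ∃ B : Clause V, Res Γ P ∧ B.1 ⊆ A.1 ∧ B.2 ⊆ A.2 ∧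
              C = (P.1 \ B.1, P.2 \ B.2)} := by
    intro Γ A
    ext C
    simp only [Set.mem_setOf_eq, Set.mem_union]
    constructor
    · intro h
      rcases fwd h with h | h | ⟨P, hP, c1, c2, d1, d2⟩
      · exact Or.inl (Or.inr (Or.inl h))
      · exact Or.inl (Or.inr (Or.inr h))
      · refine Or.inr ⟨P, (P.1 \ C.1, P.2 \ C.2), hP, d1, d2, ?_⟩
        rw [Prod.ext_iff]
        exact ⟨(Finset.sdiff_sdiff_eq_self c1).symm, (Finset.sdiff_sdiff_eq_self c2).symm⟩
    · rintro ((h | h) | ⟨P, B, hP, hb1, hb2, rfl⟩)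
      · exact h.mono Set.subset_union_left
      · exact Res.mem (Or.inr h)
      · exact bwd hP hb1 hb2
  refine ⟨?_, main⟩
  intro Γ x y h hny
  have hset : Γ ∪ {((({x} : Finset V), (∅ : Finset V)) : Clause V)} =
      Γ ∪ ({D | ∃ a ∈ ((∅ : Finset V), ({x} : Finset V)).1,
              D = ((∅ : Finset V), ({a} : Finset V))} ∪
           {D | ∃ b ∈ ((∅ : Finset V), ({x} : Finset V)).2,
              D = (({b} : Finset V), (∅ : Finset V))}) := by
    ext D; simp
  rw [hset] at h
  rcases fwd h with ⟨a, ha, _⟩ | ⟨b, hb, heq⟩ | ⟨P, hP, c1, c2, d1, d2⟩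
  · exact absurd ha (Finset.notMem_empty a)
  · have hbx : b = x := by simpa using hb
    have hyb : y = b := by
      have := congrArg Prod.fst heq
      simpa using this
    subst hbx; subst hyb
    exact Res.ax y
  · replace c1 : ({y} : Finset V) ⊆ P.1 := c1
    replace d1 : P.1 \ ({y} : Finset V) ⊆ (∅ : Finset V) := d1
    replace d2 : P.2 \ (∅ : Finset V) ⊆ ({x} : Finset V) := d2
    have hP1 : P.1 = {y} := by
      refine Finset.Subset.antisymm ?_ c1
      intro z hz
      by_cases hzy : z = y
      · simp [hzy]
      · exact absurd (d1 (Finset.mem_sdiff.2 ⟨hz, by simp [hzy]⟩)) (Finset.notMem_empty z)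
    have hP2 : P.2 ⊆ {x} := by simpa using d2
    rcases Finset.subset_singleton_iff.1 hP2 with h2 | h2
    · exact absurd (by rw [show P = (({y} : Finset V), (∅ : Finset V)) from
        Prod.ext_iff.2 ⟨hP1, h2⟩] at hP; exact hP) hny
    · rw [show P = (({y} : Finset V), ({x} : Finset V)) from
        Prod.ext_iff.2 ⟨hP1, h2⟩] at hP
      exact hP
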